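/- Let α ∈ (0,1) and let J be a finite set of jobs that is feasible on m* machines. Let S_1, S_2, …, S_N ⊆ J, with N = ⌈2m*/α⌉, be pairwise disjoint sets of α-tight jobs with S_1 non-empty and nested lifespan unions I(S_1) ⊆ I(S_2) ⊆ … ⊆ I(S_N). Then 32·(1−α)·|I(S_N)| ≥ |I(S_1)|. -/

import Mathlib

open MeasureTheory Set
open scoped ENNReal Classical

/-- A job with release time `r`, size `p > 0` and deadline `d`, satisfying `r + p ≤ d`. -/
structure Job where
  r : ℝ
  p : ℝ
  d : ℝ
  p_pos : 0 < p
  fits : r + p ≤ d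

namespace Job

/-- The lifespan `I(j) = [r_j, d_j]` of a job. -/
def lifespan (j : Job) : Set ℝ := Set.Icc j.r j.d

/-- The length `|I(j)| = d_j - r_j` of the lifespan of a job. -/
def len (j : Job) : ℝ := j.d - j.r

/-- The laxity `ℓ_j = d_j - r_j - p_j` of a job. -/
def laxity (j : Job) : ℝ := j.d - j.r - j.p

/-- A job is `α`-tight if `p_j ≥ α·|I(j)|`. -/
def IsTight (α : ℝ) (j : Job) : Prop := α * j.len ≤ j.p

end Job

/-- `P` is a schedule of the jobs `job j`, `j ∈ J`, on `m` machines: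
each job is processed on a measurable subset of its lifespan, and at every time
at most `m` jobs are processed simultaneously. -/
def IsSchedule {ι : Type*} (J : Finset ι) (job : ι → Job) (m : ℕ) (P : ι → Set ℝ) : Prop :=
  (∀ j ∈ J, MeasurableSet (P j)) ∧
  (∀ j ∈ J, P j ⊆ (job j).lifespan) ∧
  (∀ t : ℝ, ∀ S : Finset ι, S ⊆ J → (∀ j ∈ S, t ∈ P j) → S.card ≤ m)

/-- The jobs `job j`, `j ∈ J`, are feasible on `m` machines: there is a schedule on `m`
machines processing every job for exactly `p_j` time units. -/
def FeasibleOn {ι : Type*} (J : Finset ι) (job : ι → Job) (m : ℕ) : Prop :=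
  ∃ P : ι → Set ℝ, IsSchedule J job m P ∧
    ∀ j ∈ J, volume (P j) = ENNReal.ofReal (job j).p

/-- `T ⊆ ℝ` is a finite union of (closed) time intervals. -/
def FiniteUnionOfIntervals (T : Set ℝ) : Prop :=
  ∃ s : Finset (ℝ × ℝ), T = ⋃ q ∈ s, Set.Icc q.1 q.2

lemma exists_subcover {ι : Type*} (a b : ι → ℝ) (s : Finset ι) :
    ∃ t : Finset ι, t ⊆ s ∧ (⋃ j ∈ t, Set.Icc (a j) (b j)) = (⋃ j ∈ s, Set.Icc (a j) (b j)) ∧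
      ∀ x : ℝ, (t.filter (fun j => x ∈ Set.Icc (a j) (b j))).card ≤ 2 := by
  classical
  induction s using Finset.strongInductionOn with
  | _ s ih =>
    by_cases h : ∃ j ∈ s, Set.Icc (a j) (b j) ⊆ ⋃ k ∈ s.erase j, Set.Icc (a k) (b k)
    · obtain ⟨j, hj, hcov⟩ := h
      obtain ⟨t, hts, hun, hmult⟩ := ih (s.erase j) (Finset.erase_ssubset hj)
      refine ⟨t, hts.trans (Finset.erase_subset _ _), ?_, hmult⟩
      rw [hun]
      conv_rhs => rw [← Finset.insert_erase hj]
      rw [Finset.set_biUnion_insert, Set.union_eq_self_of_subset_left hcov]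
    · push_neg at h
      refine ⟨s, Finset.Subset.refl s, rfl, ?_⟩
      intro x
      by_contra hc
      push_neg at hc
      set F := s.filter (fun j => x ∈ Set.Icc (a j) (b j)) with hF
      obtain ⟨jm, hjmF, hjm⟩ := F.exists_min_image a (Finset.card_pos.mp (by omega))
      obtain ⟨jM, hjMF, hjM⟩ := F.exists_max_image b (Finset.card_pos.mp (by omega))
      have hcard : 1 ≤ ((F.erase jM).erase jm).card := by
        have h1 := Finset.pred_card_le_card_erase (s := F) (a := jM)
        have h2 := Finset.pred_card_le_card_erase (s := F.erase jM) (a := jm)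
        omega
      obtain ⟨jmid, hjmid⟩ := Finset.card_pos.mp (show 0 < ((F.erase jM).erase jm).card by omega)
      have hne1 : jmid ≠ jm := (Finset.mem_erase.mp hjmid).1
      have hne2 : jmid ≠ jM := (Finset.mem_erase.mp (Finset.mem_erase.mp hjmid).2).1
      have hmidF : jmid ∈ F := (Finset.mem_erase.mp (Finset.mem_erase.mp hjmid).2).2
      have hmids : jmid ∈ s := (Finset.mem_filter.mp hmidF).1
      have hxm : x ∈ Set.Icc (a jm) (b jm) := (Finset.mem_filter.mp hjmF).2
      have hxM : x ∈ Set.Icc (a jM) (b jM) := (Finset.mem_filter.mp hjMF).2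
      apply h jmid hmids
      intro y hy
      rcases le_total y x with h1 | h1
      · refine Set.mem_biUnion (Finset.mem_erase.mpr ⟨hne1.symm, (Finset.mem_filter.mp hjmF).1⟩) ?_
        exact ⟨le_trans (hjm jmid hmidF) hy.1, le_trans h1 hxm.2⟩
      · refine Set.mem_biUnion (Finset.mem_erase.mpr ⟨hne2.symm, (Finset.mem_filter.mp hjMF).1⟩) ?_
        exact ⟨le_trans hxM.1 h1, le_trans hy.2 (hjM jmid hmidF)⟩

lemma sum_measure_le {ι : Type*} (t : Finset ι) (A : ι → Set ℝ) (B : Set ℝ) (k : ℕ)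
    (hA : ∀ j ∈ t, MeasurableSet (A j)) (hAB : ∀ j ∈ t, A j ⊆ B) (hB : MeasurableSet B)
    (hcard : ∀ x : ℝ, ∀ u : Finset ι, u ⊆ t → (∀ j ∈ u, x ∈ A j) → u.card ≤ k) :
    ∑ j ∈ t, volume (A j) ≤ k * volume B := by
  classical
  have h1 : ∑ j ∈ t, volume (A j)
      = ∫⁻ x, ∑ j ∈ t, (A j).indicator (fun _ => (1 : ℝ≥0∞)) x := by
    rw [lintegral_finset_sum _ (fun j hj => measurable_const.indicator (hA j hj))]
    exact Finset.sum_congr rfl fun j hj => (lintegral_indicator_one (hA j hj)).symm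
  have h2 : ∀ x : ℝ, ∑ j ∈ t, (A j).indicator (fun _ => (1 : ℝ≥0∞)) x
      ≤ (k : ℝ≥0∞) * B.indicator (fun _ => (1 : ℝ≥0∞)) x := by
    intro x
    by_cases hx : x ∈ B
    · have hsum : ∑ j ∈ t, (A j).indicator (fun _ => (1 : ℝ≥0∞)) x
          = ((t.filter (fun j => x ∈ A j)).card : ℝ≥0∞) := by
        rw [← Finset.sum_filter_add_sum_filter_not t (fun j => x ∈ A j)]
        rw [Finset.sum_congr rfl (fun j hj => Set.indicator_of_mem (Finset.mem_filter.mp hj).2 _),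
          Finset.sum_congr rfl (fun j hj => Set.indicator_of_notMem (Finset.mem_filter.mp hj).2 _)]
        simp
      rw [hsum, Set.indicator_of_mem hx, mul_one]
      exact_mod_cast hcard x _ (Finset.filter_subset _ _) (fun j hj => (Finset.mem_filter.mp hj).2)
    · have : ∀ j ∈ t, (A j).indicator (fun _ => (1 : ℝ≥0∞)) x = 0 := fun j hj =>
        Set.indicator_of_notMem (fun hmem => hx (hAB j hj hmem)) _
      rw [Finset.sum_eq_zero this]
      exact zero_le
  calc ∑ j ∈ t, volume (A j)
      = ∫⁻ x, ∑ j ∈ t, (A j).indicator (fun _ => (1 : ℝ≥0∞)) x := h1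
    _ ≤ ∫⁻ x, (k : ℝ≥0∞) * B.indicator (fun _ => (1 : ℝ≥0∞)) x := lintegral_mono h2
    _ = k * volume B := by
        rw [lintegral_const_mul' _ _ (by simp)]
        congr 1
        exact lintegral_indicator_one hB

/-- Lemma: for pairwise disjoint sets `S_1, …, S_N` of `α`-tight jobs, `N = ⌈2m*/α⌉`, with
`S_1` non-empty and nested lifespan unions `I(S_1) ⊆ … ⊆ I(S_N)`, where the whole instance
is feasible on `m*` machines, we have `32·(1-α)·|I(S_N)| ≥ |I(S_1)|`. -/
theorem gamma_lower_bound {ι : Type*} (J : Finset ι) (job : ι → Job) (α : ℝ)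
    (mstar N : ℕ) (S : ℕ → Finset ι)
    (hα : α ∈ Set.Ioo (0 : ℝ) 1)
    (hfeas : FeasibleOn J job mstar)
    (hN : N = ⌈(2 * (mstar : ℝ)) / α⌉₊)
    (hN1 : 1 ≤ N)
    (hsub : ∀ i ∈ Finset.Icc 1 N, S i ⊆ J)
    (htight : ∀ i ∈ Finset.Icc 1 N, ∀ j ∈ S i, (job j).IsTight α)
    (hdisj : ∀ i ∈ Finset.Icc 1 N, ∀ k ∈ Finset.Icc 1 N, i ≠ k → Disjoint (S i) (S k))
    (hnest : ∀ i, 1 ≤ i → i < N →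
      (⋃ j ∈ S i, (job j).lifespan) ⊆ ⋃ j ∈ S (i + 1), (job j).lifespan)
    (hS1 : (S 1).Nonempty) :
    (volume (⋃ j ∈ S 1, (job j).lifespan)).toReal ≤
      32 * (1 - α) * (volume (⋃ j ∈ S N, (job j).lifespan)).toReal := by
  classical
  obtain ⟨hα0, hα1⟩ := hα
  obtain ⟨P, ⟨hPmeas, hPlife, hPcard⟩, hPvol⟩ := hfeas
  set U : ℕ → Set ℝ := fun i => ⋃ j ∈ S i, (job j).lifespan with hUdef
  show (volume (U 1)).toReal ≤ 32 * (1 - α) * (volume (U N)).toReal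
  set L : ℝ := (volume (U 1)).toReal with hLdef
  set D : ℝ := (volume (U N)).toReal with hDdef
  have hUmeas : ∀ i, MeasurableSet (U i) :=
    fun i => (S i).measurableSet_biUnion (fun j _ => measurableSet_Icc)
  have hWmeas : MeasurableSet (U 1) := hUmeas 1
  have hlen_nonneg : ∀ j : ι, 0 ≤ (job j).len := fun j => by
    have h1 := (job j).p_pos; have h2 := (job j).fits
    unfold Job.len; linarith
  have hvolI : ∀ j : ι, volume ((job j).lifespan) = ENNReal.ofReal ((job j).len) :=
    fun j => Real.volume_Icc
  have hIfin : ∀ j : ι, volume ((job j).lifespan) ≠ ⊤ := fun j => by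
    rw [hvolI j]; exact ENNReal.ofReal_ne_top
  have hUfin : ∀ i, volume (U i) ≠ ⊤ := by
    intro i
    refine ne_of_lt (lt_of_le_of_lt (measure_biUnion_finset_le _ _) ?_)
    exact ENNReal.sum_lt_top.mpr (fun j _ => lt_of_le_of_ne le_top (hIfin j))
  -- nesting chain
  have chain : ∀ k i, 1 ≤ i → i ≤ k → k ≤ N → U i ⊆ U k := by
    intro k
    induction k with
    | zero => intro i _ hik hkN; omega
    | succ n ihn =>
      intro i h1i hik hkN
      rcases Nat.lt_or_ge i (n + 1) with h | h
      · exact (ihn i h1i (by omega) (by omega)).trans (hnest n (by omega) (by omega))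
      · have hieq : i = n + 1 := by omega
        rw [hieq]
  -- choose subcovers
  choose T hTsub hTun hTmult using
    fun i : ℕ => exists_subcover (fun j => (job j).r) (fun j => (job j).d) (S i)
  have hTunU : ∀ i, (⋃ j ∈ T i, Set.Icc (job j).r (job j).d) = U i := fun i => hTun i
  -- key inequality per job
  have key1 : ∀ j ∈ J, (job j).p + (volume ((job j).lifespan ∩ U 1)).toReal
      ≤ (volume (P j ∩ U 1)).toReal + (job j).len := by
    intro j hj
    have hsub' : P j ⊆ (P j ∩ U 1) ∪ ((job j).lifespan \ U 1) := by
      intro x hx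
      by_cases hxW : x ∈ U 1
      · exact Or.inl ⟨hx, hxW⟩
      · exact Or.inr ⟨hPlife j hj hx, hxW⟩
    have h1 : ENNReal.ofReal (job j).p
        ≤ volume (P j ∩ U 1) + volume ((job j).lifespan \ U 1) := by
      rw [← hPvol j hj]
      exact (measure_mono hsub').trans (measure_union_le _ _)
    have h2 : volume ((job j).lifespan \ U 1) + volume ((job j).lifespan ∩ U 1)
        = volume ((job j).lifespan) := by
      rw [add_comm]; exact measure_inter_add_diff _ hWmeas
    have h3 : ENNReal.ofReal (job j).p + volume ((job j).lifespan ∩ U 1)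
        ≤ volume (P j ∩ U 1) + volume ((job j).lifespan) := by
      calc ENNReal.ofReal (job j).p + volume ((job j).lifespan ∩ U 1)
          ≤ (volume (P j ∩ U 1) + volume ((job j).lifespan \ U 1))
            + volume ((job j).lifespan ∩ U 1) := add_le_add h1 le_rfl
        _ = volume (P j ∩ U 1) + volume ((job j).lifespan) := by rw [add_assoc, h2]
    have hPWfin : volume (P j ∩ U 1) ≠ ⊤ :=
      ne_top_of_le_ne_top (hIfin j) (measure_mono (fun x hx => hPlife j hj hx.1))
    have hIWfin : volume ((job j).lifespan ∩ U 1) ≠ ⊤ :=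
      ne_top_of_le_ne_top (hIfin j) (measure_mono Set.inter_subset_left)
    have h4 := (ENNReal.toReal_le_toReal
      (ENNReal.add_ne_top.mpr ⟨ENNReal.ofReal_ne_top, hIWfin⟩)
      (ENNReal.add_ne_top.mpr ⟨hPWfin, hIfin j⟩)).mpr h3
    rw [ENNReal.toReal_add ENNReal.ofReal_ne_top hIWfin,
      ENNReal.toReal_add hPWfin (hIfin j),
      ENNReal.toReal_ofReal (le_of_lt (job j).p_pos), hvolI j,
      ENNReal.toReal_ofReal (hlen_nonneg j)] at h4
    exact h4
  -- length sum bound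
  have hlen_sum : ∀ i ∈ Finset.Icc 1 N, ∑ j ∈ T i, (job j).len ≤ 2 * D := by
    intro i hi
    obtain ⟨hi1, hiN⟩ := Finset.mem_Icc.mp hi
    have h1 : ∑ j ∈ T i, volume (Set.Icc (job j).r (job j).d)
        ≤ 2 * volume (⋃ j ∈ T i, Set.Icc (job j).r (job j).d) := by
      refine sum_measure_le (T i) _ _ 2 (fun j _ => measurableSet_Icc)
        (fun j hj x hx => Set.mem_biUnion hj hx)
        ((T i).measurableSet_biUnion (fun j _ => measurableSet_Icc))
        (fun x u hu hx => le_trans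
          (Finset.card_le_card (fun j hj => Finset.mem_filter.mpr ⟨hu hj, hx j hj⟩))
          (hTmult i x))
    rw [hTunU i] at h1
    have h2 : 2 * volume (U i) ≤ 2 * volume (U N) :=
      mul_le_mul_right (measure_mono (by
        rcases Nat.eq_or_lt_of_le hiN with h | h
        · rw [h]
        · exact fun x hx => chain N i hi1 hiN (le_refl N) hx)) 2
    have h3 : (∑ j ∈ T i, volume (Set.Icc (job j).r (job j).d)).toReal
        ≤ (2 * volume (U N)).toReal := by
      refine ENNReal.toReal_mono ?_ (h1.trans h2)
      exact ENNReal.mul_ne_top (by simp) (hUfin N)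
    rw [ENNReal.toReal_sum (fun j _ => by rw [Real.volume_Icc]; exact ENNReal.ofReal_ne_top),
      ENNReal.toReal_mul] at h3
    simp only [Real.volume_Icc] at h3
    calc ∑ j ∈ T i, (job j).len
        = ∑ j ∈ T i, (ENNReal.ofReal ((job j).d - (job j).r)).toReal :=
          Finset.sum_congr rfl (fun j _ => by
            rw [ENNReal.toReal_ofReal
              (show (0:ℝ) ≤ (job j).d - (job j).r from hlen_nonneg j)]; rfl)
      _ ≤ (2 : ℝ≥0∞).toReal * D := h3
      _ = 2 * D := by norm_num
  -- load lower bound per i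
  have hload : ∀ i ∈ Finset.Icc 1 N,
      L - 2 * (1 - α) * D ≤ ∑ j ∈ T i, (volume (P j ∩ U 1)).toReal := by
    intro i hi
    obtain ⟨hi1, hiN⟩ := Finset.mem_Icc.mp hi
    have hTJ : ∀ j ∈ T i, j ∈ J := fun j hj => hsub i hi (hTsub i hj)
    have hsumkey : ∑ j ∈ T i, (job j).p + ∑ j ∈ T i, (volume ((job j).lifespan ∩ U 1)).toReal
        ≤ ∑ j ∈ T i, (volume (P j ∩ U 1)).toReal + ∑ j ∈ T i, (job j).len := by
      rw [← Finset.sum_add_distrib, ← Finset.sum_add_distrib]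
      exact Finset.sum_le_sum (fun j hj => key1 j (hTJ j hj))
    have htsum : α * ∑ j ∈ T i, (job j).len ≤ ∑ j ∈ T i, (job j).p := by
      rw [Finset.mul_sum]
      exact Finset.sum_le_sum (fun j hj => htight i hi j (hTsub i hj))
    have hcover : L ≤ ∑ j ∈ T i, (volume ((job j).lifespan ∩ U 1)).toReal := by
      have hWU : U 1 ⊆ ⋃ j ∈ T i, ((job j).lifespan ∩ U 1) := by
        intro x hx
        have hx2 : x ∈ U i := chain i 1 le_rfl hi1 hiN hx
        rw [← hTunU i] at hx2
        obtain ⟨t, ⟨j, rfl⟩, ht2⟩ := hx2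
        simp only [Set.mem_iUnion] at ht2
        obtain ⟨hjT, hxj⟩ := ht2
        exact Set.mem_biUnion hjT ⟨hxj, hx⟩
      have h1 : volume (U 1) ≤ ∑ j ∈ T i, volume ((job j).lifespan ∩ U 1) :=
        (measure_mono hWU).trans (measure_biUnion_finset_le _ _)
      have hfin : ∀ j ∈ T i, volume ((job j).lifespan ∩ U 1) ≠ ⊤ :=
        fun j _ => ne_top_of_le_ne_top (hIfin j) (measure_mono Set.inter_subset_left)
      calc L ≤ (∑ j ∈ T i, volume ((job j).lifespan ∩ U 1)).toReal :=
            ENNReal.toReal_mono (by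
              rw [← lt_top_iff_ne_top]
              exact ENNReal.sum_lt_top.mpr (fun j hj => lt_top_iff_ne_top.mpr (hfin j hj))) h1
        _ = ∑ j ∈ T i, (volume ((job j).lifespan ∩ U 1)).toReal := ENNReal.toReal_sum hfin
    have hmul : (1 - α) * (∑ j ∈ T i, (job j).len) ≤ (1 - α) * (2 * D) :=
      mul_le_mul_of_nonneg_left (hlen_sum i hi) (by linarith)
    linarith
  -- global upper bound
  set Tall : Finset ι := (Finset.Icc 1 N).biUnion T with hTalldef
  have hTallJ : Tall ⊆ J := Finset.biUnion_subset.mpr (fun i hi => (hTsub i).trans (hsub i hi))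
  have hdisjT : (↑(Finset.Icc 1 N) : Set ℕ).PairwiseDisjoint T := by
    intro i hi k hk hik
    exact (hdisj i (Finset.mem_coe.mp hi) k (Finset.mem_coe.mp hk) hik).mono (hTsub i) (hTsub k)
  have hfinPW : ∀ j : ι, volume (P j ∩ U 1) ≠ ⊤ :=
    fun j => ne_top_of_le_ne_top (hUfin 1) (measure_mono Set.inter_subset_right)
  have hglobal : ∑ j ∈ Tall, volume (P j ∩ U 1) ≤ (mstar : ℝ≥0∞) * volume (U 1) := by
    refine sum_measure_le Tall _ _ mstar
      (fun j hj => (hPmeas j (hTallJ hj)).inter hWmeas)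
      (fun j _ => Set.inter_subset_right) hWmeas ?_
    intro x u hu hx
    exact hPcard x u (hu.trans hTallJ) (fun j hj => (hx j hj).1)
  have hglobalR : ∑ j ∈ Tall, (volume (P j ∩ U 1)).toReal ≤ mstar * L := by
    rw [← ENNReal.toReal_sum (fun j _ => hfinPW j)]
    calc (∑ j ∈ Tall, volume (P j ∩ U 1)).toReal
        ≤ ((mstar : ℝ≥0∞) * volume (U 1)).toReal :=
          ENNReal.toReal_mono (ENNReal.mul_ne_top (by simp) (hUfin 1)) hglobal
      _ = mstar * L := by rw [ENNReal.toReal_mul]; simp; exact Or.inl rfl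
  have hsplit : ∑ i ∈ Finset.Icc 1 N, ∑ j ∈ T i, (volume (P j ∩ U 1)).toReal
      = ∑ j ∈ Tall, (volume (P j ∩ U 1)).toReal := (Finset.sum_biUnion hdisjT).symm
  have hmain : (N : ℝ) * (L - 2 * (1 - α) * D) ≤ mstar * L := by
    calc (N : ℝ) * (L - 2 * (1 - α) * D)
        = ∑ _i ∈ Finset.Icc 1 N, (L - 2 * (1 - α) * D) := by
          rw [Finset.sum_const, Nat.card_Icc, nsmul_eq_mul]
          norm_num
      _ ≤ ∑ i ∈ Finset.Icc 1 N, ∑ j ∈ T i, (volume (P j ∩ U 1)).toReal :=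
          Finset.sum_le_sum hload
      _ = ∑ j ∈ Tall, (volume (P j ∩ U 1)).toReal := hsplit
      _ ≤ mstar * L := hglobalR
  -- final arithmetic
  have hL0 : 0 ≤ L := ENNReal.toReal_nonneg
  have hD0 : 0 ≤ D := ENNReal.toReal_nonneg
  have hm1 : 1 ≤ mstar := by
    by_contra hm
    push_neg at hm
    interval_cases mstar
    simp at hN
    omega
  have hNge : 2 * (mstar : ℝ) < N := by
    have h1 : 2 * (mstar : ℝ) / α ≤ N := by
      rw [hN]; exact Nat.le_ceil _
    have h2 : 2 * (mstar : ℝ) < 2 * (mstar : ℝ) / α := by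
      rw [lt_div_iff₀ hα0]
      have : (1 : ℝ) ≤ (mstar : ℝ) := by exact_mod_cast hm1
      nlinarith
    linarith
  by_cases hcase : L ≤ 4 * (1 - α) * D
  · have hnn : 0 ≤ (1 - α) * D := mul_nonneg (by linarith) hD0
    nlinarith
  · push_neg at hcase
    have hLpos : 0 < L := lt_of_le_of_lt (by nlinarith) hcase
    have h1 : L / 2 ≤ L - 2 * (1 - α) * D := by linarith
    have h2 : (N : ℝ) * (L / 2) ≤ mstar * L :=
      le_trans (mul_le_mul_of_nonneg_left h1 (Nat.cast_nonneg N)) hmain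
    have h3 : 2 * (mstar : ℝ) * (L / 2) < (N : ℝ) * (L / 2) :=
      mul_lt_mul_of_pos_right hNge (by linarith)
    linarith
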